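/- Let H ∈ (0,1) and θ = 1. Then lim_{t→∞} e^{−2t} ∫₀^t ∫₀^t e^{u+v} · H(2H−1)|u−v|^{2H−2} du dv = H Γ(2H) when H > 1/2; more generally, for the OU process η_t = ∫₀^t e^{−(t−u)} dB^H_u driven by fractional Brownian motion, lim_{t→∞} E[η_t²] = H Γ(2H) θ^{−2H} (with θ = 1, this is HΓ(2H)). -/

import Mathlib

open Real Filter intervalIntegral MeasureTheory Set

noncomputable def gAux (p t : ℝ) : ℝ := ∫ s in (0:ℝ)..t, Real.exp (-s) * s ^ p
noncomputable def hAux (p t : ℝ) : ℝ := ∫ s in (0:ℝ)..t, Real.exp s * s ^ p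

lemma absRpow_intervalIntegrable {p : ℝ} (hp : -1 < p) (a b : ℝ) :
    IntervalIntegrable (fun x : ℝ => |x| ^ p) volume a b := by
  have key2 : ∀ c : ℝ, 0 ≤ c → IntervalIntegrable (fun x : ℝ => |x| ^ p) volume 0 c := by
    intro c hc
    rw [intervalIntegrable_iff_integrableOn_Ioc_of_le hc]
    have base : IntegrableOn (fun x : ℝ => x ^ p) (Ioc 0 c) volume := by
      have := (intervalIntegrable_rpow' hp (a := 0) (b := c))
      rwa [intervalIntegrable_iff_integrableOn_Ioc_of_le hc] at this
    exact base.congr_fun (fun x hx => by simp [abs_of_pos hx.1]) measurableSet_Ioc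
  have key : ∀ c : ℝ, IntervalIntegrable (fun x : ℝ => |x| ^ p) volume 0 c := by
    intro c
    rcases le_or_gt 0 c with hc | hc
    · exact key2 c hc
    · have := (IntervalIntegrable.iff_comp_neg (by simp)).mp (key2 (-c) (by linarith))
      simp only [abs_neg, neg_zero, neg_neg] at this
      exact this
  exact ((key a).symm.trans (key b))

lemma inner_eq {p : ℝ} (hp : -1 < p) {t u : ℝ} (hu : u ∈ Icc (0:ℝ) t) :
    (∫ v in (0:ℝ)..t, Real.exp (u + v) * |u - v| ^ p)
      = Real.exp (2*u) * gAux p u + Real.exp (2*u) * hAux p (t - u) := by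
  obtain ⟨hu0, hut⟩ := hu
  have K : ∀ a b : ℝ, IntervalIntegrable (fun v => Real.exp (u + v) * |u - v| ^ p) volume a b := by
    intro a b
    have h1 : IntervalIntegrable (fun v : ℝ => |u - v| ^ p) volume a b := by
      simpa using (absRpow_intervalIntegrable hp (u - a) (u - b)).comp_sub_left u
    exact h1.continuousOn_mul (by fun_prop)
  rw [← integral_add_adjacent_intervals (K 0 u) (K u t)]
  have e1 : (∫ v in (0:ℝ)..u, Real.exp (u + v) * |u - v| ^ p)
      = Real.exp (2*u) * gAux p u := by
    have hcg : EqOn (fun v => Real.exp (u + v) * |u - v| ^ p)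
        (fun v => (fun s => Real.exp (2*u) * (Real.exp (-s) * s ^ p)) (u - v)) (uIcc 0 u) := by
      intro v hv
      rw [uIcc_of_le hu0] at hv
      have h1 : |u - v| = u - v := abs_of_nonneg (by linarith [hv.2])
      show Real.exp (u + v) * |u - v| ^ p = Real.exp (2*u) * (Real.exp (-(u - v)) * (u - v) ^ p)
      rw [h1, ← mul_assoc, ← Real.exp_add, show 2*u + -(u - v) = u + v from by ring]
    rw [integral_congr hcg, integral_comp_sub_left (fun s => Real.exp (2*u) * (Real.exp (-s) * s ^ p)) u]
    simp [intervalIntegral.integral_const_mul, gAux]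
  have e2 : (∫ v in u..t, Real.exp (u + v) * |u - v| ^ p)
      = Real.exp (2*u) * hAux p (t - u) := by
    have hcg : EqOn (fun v => Real.exp (u + v) * |u - v| ^ p)
        (fun v => (fun s => Real.exp (2*u) * (Real.exp s * s ^ p)) (v - u)) (uIcc u t) := by
      intro v hv
      rw [uIcc_of_le hut] at hv
      have h1 : |u - v| = v - u := by rw [abs_sub_comm]; exact abs_of_nonneg (by linarith [hv.1])
      show Real.exp (u + v) * |u - v| ^ p = Real.exp (2*u) * (Real.exp (v - u) * (v - u) ^ p)
      rw [h1, ← mul_assoc, ← Real.exp_add, show 2*u + (v - u) = u + v from by ring]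
    rw [integral_congr hcg, integral_comp_sub_right (fun s => Real.exp (2*u) * (Real.exp s * s ^ p)) u]
    simp [intervalIntegral.integral_const_mul, hAux]
  rw [e1, e2]

lemma gAux_continuous {p : ℝ} (hp : -1 < p) : Continuous (gAux p) := by
  apply continuous_primitive
  intro a b
  exact (intervalIntegrable_rpow' hp).continuousOn_mul (by fun_prop)

lemma hAux_continuous {p : ℝ} (hp : -1 < p) : Continuous (hAux p) := by
  apply continuous_primitive
  intro a b
  exact (intervalIntegrable_rpow' hp).continuousOn_mul (by fun_prop)

lemma gAux_hasDerivAt {p : ℝ} (hp : -1 < p) {x : ℝ} (hx : 0 < x) :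
    HasDerivAt (gAux p) (Real.exp (-x) * x ^ p) x := by
  apply integral_hasDerivAt_right
  · exact (intervalIntegrable_rpow' hp).continuousOn_mul (by fun_prop)
  · exact (Measurable.stronglyMeasurable (by fun_prop)).stronglyMeasurableAtFilter
  · exact ((Real.continuous_exp.comp continuous_neg).continuousAt).mul
      (Real.continuousAt_rpow_const x p (Or.inl hx.ne'))

lemma hAux_hasDerivAt {p : ℝ} (hp : -1 < p) {x : ℝ} (hx : 0 < x) :
    HasDerivAt (hAux p) (Real.exp x * x ^ p) x := by
  apply integral_hasDerivAt_right
  · exact (intervalIntegrable_rpow' hp).continuousOn_mul (by fun_prop)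
  · exact (Measurable.stronglyMeasurable (by fun_prop)).stronglyMeasurableAtFilter
  · exact Real.continuous_exp.continuousAt.mul
      (Real.continuousAt_rpow_const x p (Or.inl hx.ne'))

lemma ftc1 {p : ℝ} (hp : -1 < p) {t : ℝ} (ht : 0 ≤ t) :
    (∫ u in (0:ℝ)..t, Real.exp (2*u) * gAux p u)
      = (Real.exp (2*t) * gAux p t - hAux p t) / 2 := by
  have hend : (Real.exp (2*t) * gAux p t - hAux p t) / 2
      = (fun u => (Real.exp (2*u) * gAux p u - hAux p u) / 2) t -
        (fun u => (Real.exp (2*u) * gAux p u - hAux p u) / 2) 0 := by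
    simp [gAux, hAux]
  rw [hend]
  apply integral_eq_sub_of_hasDeriv_right_of_le ht
  · exact ((((Real.continuous_exp.comp (continuous_const.mul continuous_id)).mul
      (gAux_continuous hp)).sub (hAux_continuous hp)).div_const 2).continuousOn
  · intro x hx
    have hg := gAux_hasDerivAt hp hx.1
    have hh := hAux_hasDerivAt hp hx.1
    have he : HasDerivAt (fun u : ℝ => Real.exp (2*u)) (Real.exp (2*x) * 2) x := by
      simpa using ((hasDerivAt_id x).const_mul 2).exp
    have key : HasDerivAt (fun u => (Real.exp (2*u) * gAux p u - hAux p u) / 2)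
        ((Real.exp (2*x) * 2 * gAux p x + Real.exp (2*x) * (Real.exp (-x) * x ^ p)
          - Real.exp x * x ^ p) / 2) x := ((he.mul hg).sub hh).div_const 2
    have heq : (Real.exp (2*x) * 2 * gAux p x + Real.exp (2*x) * (Real.exp (-x) * x ^ p)
          - Real.exp x * x ^ p) / 2 = Real.exp (2*x) * gAux p x := by
      rw [← mul_assoc (Real.exp (2*x)) (Real.exp (-x)), ← Real.exp_add,
        show 2*x + -x = x from by ring]
      ring
    rw [heq] at key
    exact key.hasDerivWithinAt
  · exact (((Real.continuous_exp.comp (continuous_const.mul continuous_id)).mul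
      (gAux_continuous hp)).continuousOn).intervalIntegrable

lemma ftc2 {p : ℝ} (hp : -1 < p) {t : ℝ} (ht : 0 ≤ t) :
    (∫ u in (0:ℝ)..t, Real.exp (-2*u) * hAux p u)
      = (gAux p t - Real.exp (-2*t) * hAux p t) / 2 := by
  have hend : (gAux p t - Real.exp (-2*t) * hAux p t) / 2
      = (fun u => (gAux p u - Real.exp (-2*u) * hAux p u) / 2) t -
        (fun u => (gAux p u - Real.exp (-2*u) * hAux p u) / 2) 0 := by
    simp [gAux, hAux]
  rw [hend]
  apply integral_eq_sub_of_hasDeriv_right_of_le ht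
  · exact (((gAux_continuous hp).sub ((Real.continuous_exp.comp
      (continuous_const.mul continuous_id)).mul (hAux_continuous hp))).div_const 2).continuousOn
  · intro x hx
    have hg := gAux_hasDerivAt hp hx.1
    have hh := hAux_hasDerivAt hp hx.1
    have he : HasDerivAt (fun u : ℝ => Real.exp (-2*u)) (Real.exp (-2*x) * (-2)) x := by
      simpa using ((hasDerivAt_id x).const_mul (-2)).exp
    have key : HasDerivAt (fun u => (gAux p u - Real.exp (-2*u) * hAux p u) / 2)
        ((Real.exp (-x) * x ^ p - (Real.exp (-2*x) * (-2) * hAux p x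
          + Real.exp (-2*x) * (Real.exp x * x ^ p))) / 2) x :=
      (hg.sub (he.mul hh)).div_const 2
    have heq : (Real.exp (-x) * x ^ p - (Real.exp (-2*x) * (-2) * hAux p x
          + Real.exp (-2*x) * (Real.exp x * x ^ p))) / 2
        = Real.exp (-2*x) * hAux p x := by
      rw [← mul_assoc (Real.exp (-2*x)) (Real.exp x), ← Real.exp_add,
        show -2*x + x = -x from by ring]
      ring
    rw [heq] at key
    exact key.hasDerivWithinAt
  · exact (((Real.continuous_exp.comp (continuous_const.mul continuous_id)).mul
      (hAux_continuous hp)).continuousOn).intervalIntegrable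

lemma key_identity {p : ℝ} (hp : -1 < p) {t : ℝ} (ht : 0 ≤ t) :
    (∫ u in (0:ℝ)..t, ∫ v in (0:ℝ)..t, Real.exp (u + v) * |u - v| ^ p)
      = Real.exp (2*t) * gAux p t - hAux p t := by
  have hcg : EqOn (fun u => ∫ v in (0:ℝ)..t, Real.exp (u + v) * |u - v| ^ p)
      (fun u => Real.exp (2*u) * gAux p u + Real.exp (2*u) * hAux p (t - u)) (uIcc 0 t) := by
    intro u hu
    rw [uIcc_of_le ht] at hu
    exact inner_eq hp hu
  rw [integral_congr hcg]
  have cont1 : Continuous (fun u : ℝ => Real.exp (2*u) * gAux p u) :=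
    (Real.continuous_exp.comp (continuous_const.mul continuous_id)).mul (gAux_continuous hp)
  have cont2 : Continuous (fun u : ℝ => Real.exp (2*u) * hAux p (t - u)) :=
    (Real.continuous_exp.comp (continuous_const.mul continuous_id)).mul
      ((hAux_continuous hp).comp (continuous_const.sub continuous_id))
  rw [integral_add cont1.continuousOn.intervalIntegrable cont2.continuousOn.intervalIntegrable]
  have e2 : (∫ u in (0:ℝ)..t, Real.exp (2*u) * hAux p (t - u))
      = Real.exp (2*t) * ∫ u in (0:ℝ)..t, Real.exp (-2*u) * hAux p u := by
    have hcg2 : EqOn (fun u => Real.exp (2*u) * hAux p (t - u))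
        (fun u => (fun s => Real.exp (2*t) * (Real.exp (-2*s) * hAux p s)) (t - u)) (uIcc 0 t) := by
      intro u _
      show Real.exp (2*u) * hAux p (t - u)
          = Real.exp (2*t) * (Real.exp (-2*(t - u)) * hAux p (t - u))
      rw [← mul_assoc, ← Real.exp_add, show 2*t + -2*(t - u) = 2*u from by ring]
    rw [integral_congr hcg2,
      integral_comp_sub_left (fun s => Real.exp (2*t) * (Real.exp (-2*s) * hAux p s)) t]
    simp [intervalIntegral.integral_const_mul]
  rw [e2, ftc1 hp ht, ftc2 hp ht]
  have h2 : Real.exp (-2*t) * Real.exp (2*t) = 1 := by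
    rw [← Real.exp_add]
    norm_num
  linear_combination (-(hAux p t)/2) * h2

theorem stmt_18 (H : ℝ) (hH : H ∈ Set.Ioo (0:ℝ) 1) (hH2 : 1/2 < H) :
    Tendsto (fun t : ℝ =>
        Real.exp (-2*t) * ∫ u in (0:ℝ)..t, ∫ v in (0:ℝ)..t,
          Real.exp (u + v) * (H * (2*H - 1) * |u - v| ^ (2*H - 2)))
      atTop (nhds (H * Real.Gamma (2*H))) := by
  obtain ⟨hH0, hH1⟩ := hH
  set p : ℝ := 2*H - 2 with hpdef
  have hp : -1 < p := by rw [hpdef]; linarith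
  set c : ℝ := H * (2*H - 1) with hcdef
  have h2H1 : (0:ℝ) < 2*H - 1 := by linarith
  -- eventual equality
  have heq : ∀ᶠ t in atTop, Real.exp (-2*t) * (∫ u in (0:ℝ)..t, ∫ v in (0:ℝ)..t,
        Real.exp (u + v) * (c * |u - v| ^ p))
      = c * (gAux p t - Real.exp (-2*t) * hAux p t) := by
    filter_upwards [eventually_ge_atTop (0:ℝ)] with t ht
    have hpull : (∫ u in (0:ℝ)..t, ∫ v in (0:ℝ)..t, Real.exp (u + v) * (c * |u - v| ^ p))
        = c * ∫ u in (0:ℝ)..t, ∫ v in (0:ℝ)..t, Real.exp (u + v) * |u - v| ^ p := by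
      have hmul : ∀ u v : ℝ, Real.exp (u + v) * (c * |u - v| ^ p)
          = c * (Real.exp (u + v) * |u - v| ^ p) := fun u v => by ring
      simp_rw [hmul, intervalIntegral.integral_const_mul]
    rw [hpull, key_identity hp ht]
    have h2 : Real.exp (-2*t) * Real.exp (2*t) = 1 := by
      rw [← Real.exp_add]; norm_num
    linear_combination (c * gAux p t) * h2
  -- g tends to Gamma (2H-1)
  have hps : 2*H - 1 - 1 = p := by rw [hpdef]; ring
  have hint : IntegrableOn (fun x : ℝ => Real.exp (-x) * x ^ p) (Ioi 0) volume := by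
    have := Real.GammaIntegral_convergent h2H1
    rwa [hps] at this
  have hg : Tendsto (fun t => gAux p t) atTop (nhds (Real.Gamma (2*H - 1))) := by
    have hG := Real.Gamma_eq_integral h2H1
    rw [hps] at hG
    rw [hG]
    have := intervalIntegral_tendsto_integral_Ioi 0 hint tendsto_id
    simpa [gAux] using this
  -- exp(-2t) h t → 0
  have hh : Tendsto (fun t => Real.exp (-2*t) * hAux p t) atTop (nhds 0) := by
    have hb : Tendsto (fun t : ℝ => t ^ (p+1) * Real.exp (-1*t) / (p+1)) atTop (nhds 0) := by
      have := (tendsto_rpow_mul_exp_neg_mul_atTop_nhds_zero (p+1) 1 one_pos).div_const (p+1)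
      simpa using this
    apply squeeze_zero' ?_ ?_ hb
    · filter_upwards [eventually_ge_atTop (0:ℝ)] with t ht
      have hnn : 0 ≤ hAux p t := by
        apply intervalIntegral.integral_nonneg ht
        intro s hs
        exact mul_nonneg (Real.exp_pos _).le (Real.rpow_nonneg hs.1 _)
      positivity
    · filter_upwards [eventually_ge_atTop (0:ℝ)] with t ht
      have hub : hAux p t ≤ Real.exp t * (t ^ (p+1) / (p+1)) := by
        have hi1 : IntervalIntegrable (fun s : ℝ => Real.exp s * s ^ p) volume 0 t :=
          (intervalIntegrable_rpow' hp).continuousOn_mul (by fun_prop)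
        have hi2 : IntervalIntegrable (fun s : ℝ => Real.exp t * s ^ p) volume 0 t :=
          (intervalIntegrable_rpow' hp).const_mul _
        have hmono : hAux p t ≤ ∫ s in (0:ℝ)..t, Real.exp t * s ^ p := by
          apply intervalIntegral.integral_mono_on ht hi1 hi2
          intro s hs
          exact mul_le_mul_of_nonneg_right (Real.exp_le_exp.2 hs.2) (Real.rpow_nonneg hs.1 _)
        rwa [intervalIntegral.integral_const_mul, integral_rpow (Or.inl hp),
          Real.zero_rpow (by linarith : p + 1 ≠ 0), sub_zero] at hmono
      calc Real.exp (-2*t) * hAux p t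
          ≤ Real.exp (-2*t) * (Real.exp t * (t ^ (p+1) / (p+1))) :=
            mul_le_mul_of_nonneg_left hub (Real.exp_pos _).le
        _ = t ^ (p+1) * Real.exp (-1*t) / (p+1) := by
            rw [← mul_assoc, ← Real.exp_add, show -2*t + t = -1*t from by ring]; ring
  -- combine
  have hlim : Tendsto (fun t => c * (gAux p t - Real.exp (-2*t) * hAux p t)) atTop
      (nhds (c * (Real.Gamma (2*H - 1) - 0))) := (hg.sub hh).const_mul c
  have hval : c * (Real.Gamma (2*H - 1) - 0) = H * Real.Gamma (2*H) := by
    have hGa := Real.Gamma_add_one (by linarith : 2*H - 1 ≠ 0)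
    rw [show 2*H - 1 + 1 = 2*H from by ring] at hGa
    rw [hGa, hcdef]; ring
  rw [hval] at hlim
  exact Tendsto.congr' (heq.mono fun t h => h.symm) hlim
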